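/- Let X = ℕ and let E be the coarse structure of all E ⊆ ℕ×ℕ such that for some n, E(x) and E^{-1}(x) have at most n elements for all x. Let 𝔠 = C_E and λ_𝔠 the induced AS.R (A λ_𝔠 B iff both belong to a common member of 𝔠; equivalently A and B are both finite or both infinite). Then the family U = {Uᵢ : i ∈ ℕ} with Uᵢ = {i, i+1, …, 2i} is uniformly bounded in the AS.R space (ℕ, λ_𝔠) but is not uniformly bounded in the LS.R space (ℕ, 𝔠); in particular the converse of the statement 'uniformly bounded in (X,𝔠) implies uniformly bounded in (X,λ_𝔠)' fails. -/

import Mathlib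

def relImage {X : Type*} (E : Set (X × X)) (A : Set X) : Set X :=
  {b | ∃ a ∈ A, (a, b) ∈ E}

structure IsCoarseStructure {X : Type*} (𝓔 : Set (Set (X × X))) : Prop where
  subset_mem : ∀ ⦃E F : Set (X × X)⦄, F ∈ 𝓔 → E ⊆ F → E ∈ 𝓔
  union_mem : ∀ ⦃E F : Set (X × X)⦄, E ∈ 𝓔 → F ∈ 𝓔 → E ∪ F ∈ 𝓔
  inv_mem : ∀ ⦃E : Set (X × X)⦄, E ∈ 𝓔 → {p : X × X | (p.2, p.1) ∈ E} ∈ 𝓔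
  comp_mem : ∀ ⦃E F : Set (X × X)⦄, E ∈ 𝓔 → F ∈ 𝓔 →
    {p : X × X | ∃ z : X, (p.1, z) ∈ F ∧ (z, p.2) ∈ E} ∈ 𝓔
  diag_mem : {p : X × X | p.1 = p.2} ∈ 𝓔

def CofE {X : Type*} (𝓔 : Set (Set (X × X))) : Set (Set (Set X)) :=
  {𝓐 | ∃ E ∈ 𝓔, ∀ A ∈ 𝓐, ∀ B ∈ 𝓐, A ⊆ relImage E B}
def AVfam {X : Type*} (𝓥 : Set (Set X)) : Set (Set X) :=
  {A | A ⊆ ⋃₀ 𝓥 ∧ ∀ U ∈ 𝓥, (A ∩ U).Nonempty}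

def LSRUnifBounded {X : Type*} (𝔠 : Set (Set (Set X))) (𝓤 : Set (Set X)) : Prop :=
  ∀ 𝓥 : Set (Set X), 𝓥 ⊆ 𝓤 → 𝓥.Nonempty → AVfam 𝓥 ∈ 𝔠

def otimesFam {X : Type*} (𝓤 : Set (Set X)) : Set (X × X) :=
  {p | ∃ U ∈ 𝓤, p.1 ∈ U ∧ p.2 ∈ U}

def ASRUnifBounded {X : Type*} (l : Set X → Set X → Prop) (𝓤 : Set (Set X)) : Prop :=
  ∀ A B : Set X, A ⊆ relImage (otimesFam 𝓤) B → B ⊆ relImage (otimesFam 𝓤) A → l A B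

def Ebdd : Set (Set (ℕ × ℕ)) :=
  {E | ∃ n : ℕ, ∀ x : ℕ,
    ({y | (x, y) ∈ E}.Finite ∧ {y | (x, y) ∈ E}.ncard ≤ n) ∧
    ({y | (y, x) ∈ E}.Finite ∧ {y | (y, x) ∈ E}.ncard ≤ n)}

def Ufam : Set (Set ℕ) := {U | ∃ i : ℕ, U = Set.Icc i (2 * i)}


lemma sub_ncard {s : Set ℕ} (h : s.Subsingleton) : s.ncard ≤ 1 := by
  rw [Set.ncard_le_one_iff h.finite]
  exact fun ha hb => h ha hb

lemma pair_mem (A B : Set ℕ) (E : Set (ℕ × ℕ)) (hE : E ∈ Ebdd)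
    (h1 : A ⊆ relImage E A) (h2 : A ⊆ relImage E B)
    (h3 : B ⊆ relImage E A) (h4 : B ⊆ relImage E B) :
    ∃ 𝓐 ∈ CofE Ebdd, A ∈ 𝓐 ∧ B ∈ 𝓐 := by
  refine ⟨{A, B}, ⟨E, hE, ?_⟩, Or.inl rfl, Or.inr rfl⟩
  rintro X (rfl | rfl) Y (rfl | rfl) <;> assumption

lemma diag_mem_Ebdd : {p : ℕ × ℕ | p.1 = p.2} ∈ Ebdd := by
  refine ⟨1, fun x => ?_⟩
  have h1 : {y | (x, y) ∈ {p : ℕ × ℕ | p.1 = p.2}} = {x} := by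
    ext y; simp [eq_comm]
  have h2 : {y | (y, x) ∈ {p : ℕ × ℕ | p.1 = p.2}} = {x} := by
    ext y; simp
  rw [h1, h2]
  simp

lemma pair_fin (A B : Set ℕ) (hA : A.Finite) (hB : B.Finite)
    (hA0 : A.Nonempty) (hB0 : B.Nonempty) :
    ∃ 𝓐 ∈ CofE Ebdd, A ∈ 𝓐 ∧ B ∈ 𝓐 := by
  set S := A ∪ B with hS
  have hSfin : S.Finite := hA.union hB
  set E : Set (ℕ × ℕ) := {p | (p.1 ∈ S ∧ p.2 ∈ S) ∨ p.1 = p.2} with hEdef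
  have hE : E ∈ Ebdd := by
    refine ⟨S.ncard + 1, fun x => ?_⟩
    have key : ∀ s : Set ℕ, s ⊆ insert x S → s.Finite ∧ s.ncard ≤ S.ncard + 1 := by
      intro s hs
      have hfin : s.Finite := (hSfin.insert x).subset hs
      refine ⟨hfin, le_trans (Set.ncard_le_ncard hs (hSfin.insert x)) ?_⟩
      exact Set.ncard_insert_le x S
    constructor
    · refine key _ ?_
      rintro y (⟨-, hy⟩ | h)
      · exact Set.mem_insert_of_mem _ hy
      · exact Set.mem_insert_iff.mpr (Or.inl h.symm)
    · refine key _ ?_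
      rintro y (⟨hy, -⟩ | h)
      · exact Set.mem_insert_of_mem _ hy
      · exact Set.mem_insert_iff.mpr (Or.inl h)
  have himg : ∀ C D : Set ℕ, C ⊆ S → D ⊆ S → D.Nonempty → C ⊆ relImage E D := by
    intro C D hC hD ⟨d, hd⟩ c hc
    exact ⟨d, hd, Or.inl ⟨hD hd, hC hc⟩⟩
  exact pair_mem A B E hE (himg A A Set.subset_union_left Set.subset_union_left hA0)
    (himg A B Set.subset_union_left Set.subset_union_right hB0)
    (himg B A Set.subset_union_right Set.subset_union_left hA0)
    (himg B B Set.subset_union_right Set.subset_union_right hB0)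

lemma pair_inf (A B : Set ℕ) (hA : A.Infinite) (hB : B.Infinite) :
    ∃ 𝓐 ∈ CofE Ebdd, A ∈ 𝓐 ∧ B ∈ 𝓐 := by
  classical
  let f : A → ℕ := fun a => ((Set.Infinite.natEmbedding B hB) (a : ℕ) : ℕ)
  let g : B → ℕ := fun b => ((Set.Infinite.natEmbedding A hA) (b : ℕ) : ℕ)
  have hfB : ∀ a : A, f a ∈ B := fun a => ((Set.Infinite.natEmbedding B hB) (a : ℕ)).2
  have hgA : ∀ b : B, g b ∈ A := fun b => ((Set.Infinite.natEmbedding A hA) (b : ℕ)).2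
  have hfinj : ∀ a₁ a₂ : A, f a₁ = f a₂ → a₁ = a₂ := by
    intro a₁ a₂ h
    have := (Set.Infinite.natEmbedding B hB).injective (Subtype.ext h)
    exact Subtype.ext (by simpa using congrArg id this)
  have hginj : ∀ b₁ b₂ : B, g b₁ = g b₂ → b₁ = b₂ := by
    intro b₁ b₂ h
    have := (Set.Infinite.natEmbedding A hA).injective (Subtype.ext h)
    exact Subtype.ext (by simpa using congrArg id this)
  set E : Set (ℕ × ℕ) :=
    {p | (∃ a : A, p.1 = f a ∧ p.2 = (a : ℕ)) ∨ (∃ b : B, p.1 = g b ∧ p.2 = (b : ℕ)) ∨ p.1 = p.2}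
    with hEdef
  have hE : E ∈ Ebdd := by
    refine ⟨3, fun x => ?_⟩
    have bound : ∀ s₁ s₂ s₃ : Set ℕ, s₁.Subsingleton → s₂.Subsingleton → s₃.Subsingleton →
        ∀ s : Set ℕ, s ⊆ s₁ ∪ s₂ ∪ s₃ → s.Finite ∧ s.ncard ≤ 3 := by
      intro s₁ s₂ s₃ h₁ h₂ h₃ s hs
      have hfin : (s₁ ∪ s₂ ∪ s₃).Finite := ((h₁.finite.union h₂.finite).union h₃.finite)
      refine ⟨hfin.subset hs, le_trans (Set.ncard_le_ncard hs hfin) ?_⟩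
      calc (s₁ ∪ s₂ ∪ s₃).ncard ≤ (s₁ ∪ s₂).ncard + s₃.ncard := Set.ncard_union_le _ _
        _ ≤ s₁.ncard + s₂.ncard + s₃.ncard := by
            exact Nat.add_le_add_right (Set.ncard_union_le _ _) _
        _ ≤ 1 + 1 + 1 := by
            exact add_le_add (add_le_add (sub_ncard h₁) (sub_ncard h₂)) (sub_ncard h₃)
        _ = 3 := rfl
    constructor
    · refine bound {y | ∃ a : A, x = f a ∧ y = (a : ℕ)} {y | ∃ b : B, x = g b ∧ y = (b : ℕ)}
        {x} ?_ ?_ (Set.subsingleton_singleton) _ ?_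
      · rintro y₁ ⟨a₁, h₁, rfl⟩ y₂ ⟨a₂, h₂, rfl⟩
        exact congrArg _ (hfinj a₁ a₂ (h₁ ▸ h₂.symm ▸ rfl))
      · rintro y₁ ⟨b₁, h₁, rfl⟩ y₂ ⟨b₂, h₂, rfl⟩
        exact congrArg _ (hginj b₁ b₂ (h₁ ▸ h₂.symm ▸ rfl))
      · rintro y (⟨a, ha1, ha2⟩ | ⟨b, hb1, hb2⟩ | h)
        · exact Or.inl (Or.inl ⟨a, ha1, ha2⟩)
        · exact Or.inl (Or.inr ⟨b, hb1, hb2⟩)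
        · exact Or.inr (by simpa using h.symm)
    · refine bound {y | ∃ a : A, y = f a ∧ x = (a : ℕ)} {y | ∃ b : B, y = g b ∧ x = (b : ℕ)}
        {x} ?_ ?_ (Set.subsingleton_singleton) _ ?_
      · rintro y₁ ⟨a₁, rfl, h₁⟩ y₂ ⟨a₂, rfl, h₂⟩
        have : a₁ = a₂ := Subtype.ext (h₁ ▸ h₂ ▸ rfl)
        rw [this]
      · rintro y₁ ⟨b₁, rfl, h₁⟩ y₂ ⟨b₂, rfl, h₂⟩
        have : b₁ = b₂ := Subtype.ext (h₁ ▸ h₂ ▸ rfl)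
        rw [this]
      · rintro y (⟨a, ha1, ha2⟩ | ⟨b, hb1, hb2⟩ | h)
        · exact Or.inl (Or.inl ⟨a, ha1, ha2⟩)
        · exact Or.inl (Or.inr ⟨b, hb1, hb2⟩)
        · exact Or.inr (by simpa using h)
  have hdiag : ∀ C : Set ℕ, C ⊆ relImage E C := by
    intro C c hc
    exact ⟨c, hc, Or.inr (Or.inr rfl)⟩
  have hAB : A ⊆ relImage E B := by
    intro a ha
    exact ⟨f ⟨a, ha⟩, hfB _, Or.inl ⟨⟨a, ha⟩, rfl, rfl⟩⟩
  have hBA : B ⊆ relImage E A := by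
    intro b hb
    exact ⟨g ⟨b, hb⟩, hgA _, Or.inr (Or.inl ⟨⟨b, hb⟩, rfl, rfl⟩)⟩
  exact pair_mem A B E hE (hdiag A) hAB hBA (hdiag B)

lemma img_fin (F : Set ℕ) (hF : F.Finite) : (relImage (otimesFam Ufam) F).Finite := by
  have hsub : relImage (otimesFam Ufam) F ⊆ ⋃ b ∈ F, Set.Iic (2 * b) := by
    rintro y ⟨a, haF, U, ⟨i, rfl⟩, hai, hyi⟩
    have h1 : i ≤ a := hai.1
    have h2 : y ≤ 2 * i := hyi.2
    exact Set.mem_biUnion haF (Set.mem_Iic.mpr (by omega))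
  exact (hF.biUnion (fun b _ => Set.finite_Iic _)).subset hsub

lemma relImage_empty (E : Set (ℕ × ℕ)) : relImage E (∅ : Set ℕ) = ∅ := by
  simp [relImage]


theorem stmt19 :
    ASRUnifBounded (fun A B : Set ℕ => ∃ 𝓐 ∈ CofE Ebdd, A ∈ 𝓐 ∧ B ∈ 𝓐) Ufam ∧
    ¬ LSRUnifBounded (CofE Ebdd) Ufam := by
  constructor
  · intro A B hab hba
    by_cases hA : A.Finite
    · have hB : B.Finite := (img_fin A hA).subset hba
      by_cases hAe : A = ∅
      · have hBe : B = ∅ := by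
          subst hAe
          rw [relImage_empty] at hba
          exact Set.subset_empty_iff.mp hba
        subst hAe; subst hBe
        exact pair_mem ∅ ∅ _ diag_mem_Ebdd (by simp) (by simp) (by simp) (by simp)
      · have hA0 : A.Nonempty := Set.nonempty_iff_ne_empty.mpr hAe
        have hB0 : B.Nonempty := by
          rcases Set.eq_empty_or_nonempty B with rfl | h
          · exfalso
            rw [relImage_empty] at hab
            exact hAe (Set.subset_empty_iff.mp hab)
          · exact h
        exact pair_fin A B hA hB hA0 hB0
    · have hB : B.Infinite := fun hBf => hA ((img_fin B hBf).subset hab)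
      exact pair_inf A B hA hB
  · intro h
    obtain ⟨E, ⟨n, hn⟩, hcov⟩ := h Ufam subset_rfl ⟨Set.Icc 0 (2 * 0), 0, rfl⟩
    set S : Set ℕ := ⋃ y ∈ Set.Iic (2 * n), {x | (y, x) ∈ E} with hSdef
    have hSfin : S.Finite := Set.Finite.biUnion (Set.finite_Iic _) (fun y _ => (hn y).1.1)
    obtain ⟨x, hx⟩ := hSfin.infinite_compl.nonempty
    have hxS : ∀ y, y ≤ 2 * n → (y, x) ∉ E := fun y hy hE' =>
      hx (Set.mem_biUnion (Set.mem_Iic.mpr hy) hE')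
    have hRfin : {y | (y, x) ∈ E}.Finite := (hn x).2.1
    have hRcard : {y | (y, x) ∈ E}.ncard ≤ n := (hn x).2.2
    have hsel : ∀ i : ℕ, ∃ b, b ∈ Set.Icc i (2 * i) ∧ (b, x) ∉ E := by
      intro i
      by_cases hi : i ≤ n
      · exact ⟨i, Set.mem_Icc.mpr (by omega), hxS i (by omega)⟩
      · by_contra hcon
        push_neg at hcon
        have hsub : Set.Icc i (2 * i) ⊆ {y | (y, x) ∈ E} := fun b hb => hcon b hb
        have h1 : (Set.Icc i (2 * i)).ncard ≤ {y | (y, x) ∈ E}.ncard :=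
          Set.ncard_le_ncard hsub hRfin
        have h2 : (Set.Icc i (2 * i)).ncard = 2 * i + 1 - i := by
          rw [Set.ncard_eq_toFinset_card']; simp
        omega
    choose c hc1 hc2 using hsel
    have hBmem : Set.range c ∈ AVfam Ufam := by
      refine ⟨?_, ?_⟩
      · rintro b ⟨i, rfl⟩
        exact ⟨Set.Icc i (2 * i), ⟨i, rfl⟩, hc1 i⟩
      · rintro U ⟨i, rfl⟩
        exact ⟨c i, ⟨i, rfl⟩, hc1 i⟩
    have hUmem : (Set.univ : Set ℕ) ∈ AVfam Ufam := by
      refine ⟨?_, ?_⟩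
      · intro z _
        exact ⟨Set.Icc z (2 * z), ⟨z, rfl⟩, Set.mem_Icc.mpr (by omega)⟩
      · rintro U ⟨i, rfl⟩
        exact ⟨i, Set.mem_univ i, Set.mem_Icc.mpr (by omega)⟩
    obtain ⟨b, hbB, hbE⟩ := hcov Set.univ hUmem (Set.range c) hBmem (Set.mem_univ x)
    obtain ⟨i, rfl⟩ := hbB
    exact hc2 i hbE
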